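/- Every injective endomorphism of B(1,n) with |n| > 1 induces the identity map on the quotient ℤ of the exact sequence 0 → K → B(1,n) → ℤ → 1. Consequently, every injective endomorphism of B(1,n) has infinitely many twisted conjugacy classes. -/

import Mathlib

/-- The defining relation of the Baumslag-Solitar group `B(m,n)`:
`a⁻¹ bᵐ a = bⁿ`, where `a` is `FreeGroup.of false` and `b` is `FreeGroup.of true`. -/
def BSrel (m n : ℤ) : Set (FreeGroup Bool) :=
  {(FreeGroup.of false)⁻¹ * (FreeGroup.of true) ^ m * FreeGroup.of false *
    ((FreeGroup.of true) ^ n)⁻¹}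

/-- The Baumslag-Solitar group `B(m,n) = ⟨a, b | a⁻¹ bᵐ a = bⁿ⟩`. -/
abbrev BS (m n : ℤ) : Type := PresentedGroup (BSrel m n)

/-- The generator `a` of `B(m,n)`. -/
def BSa (m n : ℤ) : BS m n := PresentedGroup.of false

/-- The generator `b` of `B(m,n)`. -/
def BSb (m n : ℤ) : BS m n := PresentedGroup.of true

/-- Twisted conjugacy: `α` and `α'` are `φ`-conjugate if `α' = γ * α * φ(γ)⁻¹`
for some `γ`. -/
def twistedConj {G : Type*} [Group G] (φ : G →* G) (α α' : G) : Prop :=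
  ∃ γ : G, α' = γ * α * (φ γ)⁻¹

namespace BSaux

open Multiplicative SemidirectProduct

/-- scaling automorphism of `Multiplicative ℚ` by a unit -/
def scaleAut (v : ℚˣ) : MulAut (Multiplicative ℚ) where
  toFun x := ofAdd ((v : ℚ) * x.toAdd)
  invFun x := ofAdd (((v⁻¹ : ℚˣ) : ℚ) * x.toAdd)
  left_inv x := by simp [← mul_assoc]
  right_inv x := by simp [← mul_assoc]
  map_mul' x y := by simp [mul_add, ofAdd_add]

def scaleHom : ℚˣ →* MulAut (Multiplicative ℚ) where
  toFun := scaleAut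
  map_one' := by ext x; simp [scaleAut]
  map_mul' v w := by ext x; simp [scaleAut, mul_assoc]

lemma scaleAut_apply (v : ℚˣ) (x : Multiplicative ℚ) :
    scaleHom v x = ofAdd ((v : ℚ) * x.toAdd) := rfl


lemma bs_rel (n : ℤ) : (BSa 1 n)⁻¹ * BSb 1 n * BSa 1 n = (BSb 1 n) ^ n := by
  have h : PresentedGroup.mk (BSrel 1 n) ((FreeGroup.of false)⁻¹ *
      (FreeGroup.of true) ^ (1:ℤ) * FreeGroup.of false * ((FreeGroup.of true) ^ n)⁻¹) = 1 := by
    apply (QuotientGroup.eq_one_iff _).mpr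
    exact Subgroup.subset_normalClosure rfl
  simp only [map_mul, map_inv, map_zpow] at h
  have h2 : (BSa 1 n)⁻¹ * (BSb 1 n) ^ (1:ℤ) * BSa 1 n * ((BSb 1 n) ^ n)⁻¹ = 1 := h
  rw [zpow_one] at h2
  exact mul_inv_eq_one.mp h2

variable (n : ℤ)

local notation "a" => BSa 1 n
local notation "b" => BSb 1 n

lemma conj_b_zpow (m : ℤ) : (a)⁻¹ * (b) ^ m * (a) = (b) ^ (n * m) := by
  have : (a)⁻¹ * (b) ^ m * ((a)⁻¹)⁻¹ = ((a)⁻¹ * (b) * ((a)⁻¹)⁻¹) ^ m := (conj_zpow).symm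
  rw [inv_inv] at this
  rw [this, bs_rel n, ← zpow_mul]

lemma shift (m : ℤ) : (a) * (b) ^ (n * m) * (a)⁻¹ = (b) ^ m := by
  rw [← conj_b_zpow n m]
  group

/-- lifting the exponent base -/
lemma lift_lemma : ∀ (t k : ℕ) (m : ℤ),
    (a) ^ k * (b) ^ m * ((a) ^ k)⁻¹ = (a) ^ (k + t) * (b) ^ (m * n ^ t) * ((a) ^ (k + t))⁻¹ := by
  intro t
  induction t with
  | zero => intro k m; simp
  | succ t ih =>
    intro k m
    rw [ih k m]
    have h2 : (a) * (b) ^ (m * n ^ (t+1)) * (a)⁻¹ = (b) ^ (m * n ^ t) := by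
      have h := shift n (m * n ^ t)
      rw [show n * (m * n ^ t) = m * n ^ (t+1) by ring] at h
      exact h
    have h3 : k + (t+1) = (k + t) + 1 := by omega
    rw [h3, pow_succ, ← h2]
    group


/-- The set of elements `a^k b^m a^{-k}`. -/
def S : Subgroup (BS 1 n) where
  carrier := {g | ∃ (k : ℕ) (m : ℤ), g = (a) ^ k * (b) ^ m * ((a) ^ k)⁻¹}
  one_mem' := ⟨0, 0, by simp⟩
  mul_mem' := by
    rintro g h ⟨k, m, rfl⟩ ⟨l, p, rfl⟩
    refine ⟨k + l, m * n ^ l + p * n ^ k, ?_⟩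
    rw [lift_lemma n l k m, lift_lemma n k l p, add_comm l k, zpow_add]
    group
  inv_mem' := by
    rintro g ⟨k, m, rfl⟩
    exact ⟨k, -m, by group⟩

lemma prod_S (k : ℕ) (x y : ℤ) :
    ((a) ^ k * (b) ^ x * ((a) ^ k)⁻¹) * ((a) ^ k * (b) ^ y * ((a) ^ k)⁻¹)
      = (a) ^ k * (b) ^ (x + y) * ((a) ^ k)⁻¹ := by
  rw [zpow_add]; group

lemma a_mem_normalizer : (a) ∈ Subgroup.normalizer (S n : Set (BS 1 n)) := by
  rw [Subgroup.mem_normalizer_iff]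
  intro h
  constructor
  · rintro ⟨k, m, rfl⟩
    refine ⟨k + 1, m, ?_⟩
    rw [pow_succ']
    group
  · rintro ⟨k, m, hh⟩
    have h1 : h = (a)⁻¹ * ((a) ^ k * (b) ^ m * ((a) ^ k)⁻¹) * a := by
      rw [← hh]; group
    rw [lift_lemma n 1 k m] at h1
    refine ⟨k, m * n ^ 1, ?_⟩
    rw [h1, pow_succ]
    group

lemma b_comm_S (k : ℕ) (m : ℤ) :
    (b) * ((a) ^ k * (b) ^ m * ((a) ^ k)⁻¹) = ((a) ^ k * (b) ^ m * ((a) ^ k)⁻¹) * (b) := by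
  have hb : (b) = (a) ^ k * (b) ^ ((n:ℤ) ^ k) * ((a) ^ k)⁻¹ := by
    have := lift_lemma n k 0 1
    simpa using this
  calc (b) * ((a) ^ k * (b) ^ m * ((a) ^ k)⁻¹)
      = ((a) ^ k * (b) ^ ((n:ℤ) ^ k) * ((a) ^ k)⁻¹) * ((a) ^ k * (b) ^ m * ((a) ^ k)⁻¹) := by
        rw [← hb]
    _ = (a) ^ k * (b) ^ ((n:ℤ) ^ k + m) * ((a) ^ k)⁻¹ := prod_S n k _ _
    _ = (a) ^ k * (b) ^ (m + (n:ℤ) ^ k) * ((a) ^ k)⁻¹ := by rw [add_comm]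
    _ = ((a) ^ k * (b) ^ m * ((a) ^ k)⁻¹) * ((a) ^ k * (b) ^ ((n:ℤ) ^ k) * ((a) ^ k)⁻¹) :=
        (prod_S n k _ _).symm
    _ = ((a) ^ k * (b) ^ m * ((a) ^ k)⁻¹) * (b) := by rw [← hb]

lemma b_mem_normalizer : (b) ∈ Subgroup.normalizer (S n : Set (BS 1 n)) := by
  rw [Subgroup.mem_normalizer_iff]
  intro h
  constructor
  · rintro ⟨k, m, rfl⟩
    refine ⟨k, m, ?_⟩
    rw [b_comm_S n k m]
    group
  · rintro ⟨k, m, hh⟩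
    have h1 : h = (b)⁻¹ * (((a) ^ k * (b) ^ m * ((a) ^ k)⁻¹) * (b)) := by
      rw [← hh]; group
    rw [← b_comm_S n k m] at h1
    refine ⟨k, m, ?_⟩
    rw [h1]
    group

lemma S_normal : (S n).Normal := by
  rw [← Subgroup.normalizer_eq_top_iff]
  rw [eq_top_iff]
  intro g _
  refine PresentedGroup.generated_by _ _ ?_ g
  intro j
  cases j
  · exact a_mem_normalizer n
  · exact b_mem_normalizer n


open Multiplicative in
lemma ker_le_S (π : BS 1 n →* Multiplicative ℤ) (haa : π (a) = Multiplicative.ofAdd 1)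
    (hbb : π (b) = 1) : ∀ g : BS 1 n, π g = 1 → g ∈ S n := by
  have hnormal := S_normal n
  let T : Subgroup (BS 1 n) :=
    { carrier := {g | g * (a) ^ (-(toAdd (π g))) ∈ S n}
      one_mem' := by
        simpa using (S n).one_mem
      mul_mem' := by
        intro g h hg hh
        have key : g * h * (a) ^ (-(toAdd (π g) + toAdd (π h)))
            = (g * (h * (a) ^ (-(toAdd (π h)))) * g⁻¹) * (g * (a) ^ (-(toAdd (π g)))) := by
          group
        show g * h * (a) ^ (-(toAdd (π (g * h)))) ∈ S n
        rw [map_mul, toAdd_mul, key]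
        exact mul_mem (hnormal.conj_mem _ hh g) hg
      inv_mem' := by
        intro g hg
        have hs : g * (a) ^ (-(toAdd (π g))) ∈ S n := hg
        have key : g⁻¹ * (a) ^ (toAdd (π g))
            = ((a) ^ (-(toAdd (π g)))) * (g * (a) ^ (-(toAdd (π g))))⁻¹
              * ((a) ^ (-(toAdd (π g))))⁻¹ := by
          group
        show g⁻¹ * (a) ^ (-(toAdd (π g⁻¹))) ∈ S n
        rw [map_inv, toAdd_inv, neg_neg, key]
        exact hnormal.conj_mem _ (inv_mem hs) _ }
  have hT : ∀ g : BS 1 n, g ∈ T := by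
    intro g
    refine PresentedGroup.generated_by _ T ?_ g
    intro j
    cases j
    · show (a) * (a) ^ (-(toAdd (π (a)))) ∈ S n
      rw [haa]
      simpa using (S n).one_mem
    · show (b) * (a) ^ (-(toAdd (π (b)))) ∈ S n
      rw [hbb]
      simpa using ⟨0, 1, by simp⟩
  intro g hg
  have := hT g
  have h2 : g * (a) ^ (-(toAdd (π g))) ∈ S n := this
  rw [hg] at h2
  simpa using h2


def fgen (h : (n:ℚ) ≠ 0) : Bool → Multiplicative ℚ ⋊[scaleHom] ℚˣ := fun x =>
  if x then SemidirectProduct.inl (ofAdd (1:ℚ))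
  else SemidirectProduct.inr (Units.mk0 (n:ℚ) h)⁻¹

lemma fgen_true (h : (n:ℚ) ≠ 0) : fgen n h true = SemidirectProduct.inl (ofAdd (1:ℚ)) := rfl

lemma fgen_false (h : (n:ℚ) ≠ 0) :
    fgen n h false = SemidirectProduct.inr (Units.mk0 (n:ℚ) h)⁻¹ := rfl

lemma rels_check (h : (n:ℚ) ≠ 0) : ∀ r ∈ BSrel 1 n,
    (FreeGroup.lift (fgen n h)) r = 1 := by
  intro r hr
  simp only [BSrel, Set.mem_singleton_iff] at hr
  subst hr
  simp only [map_mul, map_inv, map_zpow, FreeGroup.lift_apply_of, fgen_true, fgen_false]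
  rw [mul_inv_eq_one, zpow_one, inv_inv]
  have h2 : (inr (Units.mk0 (n:ℚ) h) : Multiplicative ℚ ⋊[scaleHom] ℚˣ) * inl (ofAdd (1:ℚ)) *
      (inr (Units.mk0 (n:ℚ) h))⁻¹ = inl (scaleHom (Units.mk0 (n:ℚ) h) (ofAdd (1:ℚ))) := by
    rw [← map_inv, ← inl_aut]
  have h3 : scaleHom (Units.mk0 (n:ℚ) h) (ofAdd (1:ℚ)) = (ofAdd (1:ℚ)) ^ n := by
    apply toAdd.injective
    simp [scaleAut_apply, toAdd_zpow]
  rw [h2, h3, map_zpow]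

def rho (h : (n:ℚ) ≠ 0) : BS 1 n →* Multiplicative ℚ ⋊[scaleHom] ℚˣ :=
  PresentedGroup.toGroup (rels_check n h)

lemma rho_a (h : (n:ℚ) ≠ 0) : rho n h (a) = inr (Units.mk0 (n:ℚ) h)⁻¹ := by
  have := PresentedGroup.toGroup.of (rels_check n h) (x := false)
  rw [fgen_false] at this
  exact this

lemma rho_b (h : (n:ℚ) ≠ 0) : rho n h (b) = inl (ofAdd (1:ℚ)) := by
  have := PresentedGroup.toGroup.of (rels_check n h) (x := true)
  rw [fgen_true] at this
  exact this

lemma rho_right (h : (n:ℚ) ≠ 0) (π : BS 1 n →* Multiplicative ℤ)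
    (haa : π (a) = Multiplicative.ofAdd 1) (hbb : π (b) = 1) (g : BS 1 n) :
    (rho n h g).right = (Units.mk0 (n:ℚ) h)⁻¹ ^ (toAdd (π g)) := by
  have : (SemidirectProduct.rightHom).comp (rho n h)
      = (zpowersHom ℚˣ (Units.mk0 (n:ℚ) h)⁻¹).comp π := by
    apply PresentedGroup.ext
    intro x
    cases x
    · show SemidirectProduct.rightHom (rho n h (a)) = (zpowersHom ℚˣ _) (π (a))
      rw [rho_a, haa]
      simp [zpowersHom_apply]
    · show SemidirectProduct.rightHom (rho n h (b)) = (zpowersHom ℚˣ _) (π (b))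
      rw [rho_b, hbb]
      simp [zpowersHom_apply]
  have h2 := congrFun (congrArg (fun f => f.toFun) this) g
  simpa [zpowersHom_apply, SemidirectProduct.rightHom] using h2

end BSaux

open BSaux Multiplicative SemidirectProduct in
theorem BS_one_n_injective_reidemeister_infinite' (n : ℤ) (hn : 1 < |n|)
    (φ : BS 1 n →* BS 1 n) (hφ : Function.Injective φ)
    (π : BS 1 n →* Multiplicative ℤ)
    (ha : π (BSa 1 n) = Multiplicative.ofAdd 1) (hb : π (BSb 1 n) = 1) :
    π.comp φ = π ∧ Infinite (Quot (twistedConj φ)) := by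
  have hn0 : n ≠ 0 := by intro h; rw [h] at hn; norm_num at hn
  have hn1 : n ≠ 1 := by intro h; rw [h] at hn; norm_num at hn
  have hq : (n:ℚ) ≠ 0 := Int.cast_ne_zero.mpr hn0
  set v : ℚˣ := Units.mk0 (n:ℚ) hq with hv
  -- the relation pushed through φ
  have relφ : (φ (BSa 1 n))⁻¹ * φ (BSb 1 n) * φ (BSa 1 n) = (φ (BSb 1 n)) ^ n := by
    have := congrArg φ (bs_rel n)
    simpa only [map_mul, map_inv, map_zpow] using this
  -- Step A : π (φ b) = 1
  have hA : π (φ (BSb 1 n)) = 1 := by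
    have e := congrArg π relφ
    simp only [map_mul, map_inv, map_zpow] at e
    have e2 := congrArg toAdd e
    simp only [toAdd_mul, toAdd_inv, toAdd_zpow, smul_eq_mul] at e2
    set l := toAdd (π (φ (BSb 1 n))) with hl
    have hl0 : l = n * l := by linarith
    have hfac : (n - 1) * l = 0 := by rw [sub_mul, one_mul, ← hl0, sub_self]
    have hll : l = 0 := by
      rcases mul_eq_zero.mp hfac with h' | h'
      · exfalso; apply hn1; linarith
      · exact h'
    apply toAdd.injective
    rw [toAdd_one, ← hl, hll]
  -- Step B : φ b = a^k b^m a^{-k}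
  obtain ⟨k, m, hkm⟩ := ker_le_S n π ha hb (φ (BSb 1 n)) hA
  have hbne1 : (BSb 1 n) ≠ 1 := by
    intro e
    have h1 : (inl (ofAdd (1:ℚ)) : Multiplicative ℚ ⋊[scaleHom] ℚˣ) = inl 1 := by
      rw [← rho_b n hq, e, map_one, map_one]
    have h2 := SemidirectProduct.inl_injective h1
    have h3 := congrArg toAdd h2
    rw [toAdd_ofAdd, toAdd_one] at h3
    norm_num at h3
  have hm : m ≠ 0 := by
    rintro rfl
    apply hbne1
    apply hφ
    rw [hkm, map_one]
    group
  -- value of ρ (φ b)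
  set q : ℚ := ((v⁻¹ ^ k : ℚˣ) : ℚ) * m with hqdef
  have hqne : q ≠ 0 := by
    apply mul_ne_zero
    · exact Units.ne_zero _
    · exact_mod_cast hm
  have hrhofb : rho n hq (φ (BSb 1 n)) = inl (ofAdd q) := by
    rw [hkm, map_mul, map_mul, map_inv, map_pow, map_zpow, rho_a, rho_b]
    rw [← map_pow, ← map_zpow, ← map_inv, ← inl_aut]
    congr 1
    apply toAdd.injective
    rw [scaleAut_apply]
    simp only [toAdd_ofAdd, toAdd_zpow, toAdd_ofAdd, smul_eq_mul, mul_one, hqdef]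
    simp [zsmul_eq_mul, hv]
  -- apply ρ to the relation
  set A : Multiplicative ℚ ⋊[scaleHom] ℚˣ := rho n hq (φ (BSa 1 n)) with hA2
  have E : A⁻¹ * inl (ofAdd q) * A = (inl (ofAdd q)) ^ n := by
    have := congrArg (rho n hq) relφ
    simp only [map_mul, map_inv, map_zpow] at this
    rw [hrhofb] at this
    exact this
  have E2 : inl (ofAdd q) * A = A * (inl (ofAdd q)) ^ n := by
    rw [← E]; group
  have E3 := congrArg SemidirectProduct.left E2
  rw [← map_zpow] at E3
  simp only [mul_left, left_inl, right_inl, map_one, MulAut.one_apply] at E3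
  -- E3 : ofAdd q * A.left = A.left * scaleHom A.right (ofAdd q ^ n)
  have E4 := congrArg toAdd E3
  simp only [toAdd_mul, scaleAut_apply, toAdd_ofAdd, toAdd_zpow, smul_eq_mul,
    zsmul_eq_mul] at E4
  -- E4 : q + toAdd A.left = toAdd A.left + ↑A.right * (n * q)
  set d : ℤ := toAdd (π (φ (BSa 1 n))) with hd
  have hright : A.right = v⁻¹ ^ d := by
    rw [hA2]; exact rho_right n hq π ha hb _
  have hrightval : ((A.right : ℚˣ) : ℚ) = (n:ℚ) ^ (-d) := by
    rw [hright, Units.val_zpow_eq_zpow_val, Units.val_inv_eq_inv_val, inv_zpow, ← zpow_neg, hv,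
      Units.val_mk0]
  have E5 : q = (n:ℚ) ^ (-d) * ((n:ℚ) * q) := by
    rw [← hrightval]
    linarith [E4]
  have E6 : (n:ℚ) ^ (-d) * (n:ℚ) = 1 := by
    apply mul_right_cancel₀ hqne
    rw [one_mul, mul_assoc]
    exact E5.symm
  have hd1 : d = 1 := by
    have E7 : (n:ℚ) ^ (-d + 1) = (n:ℚ) ^ (0:ℤ) := by
      rw [zpow_add₀ hq, zpow_one, zpow_zero, E6]
    have E8 : ((n:ℚ) ^ (2:ℤ)) ^ (-d + 1) = ((n:ℚ) ^ (2:ℤ)) ^ (0:ℤ) := by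
      rw [← zpow_mul, mul_comm, zpow_mul, E7]
      simp
    have hn2 : 1 < n * n := by
      rcases abs_cases n with ⟨h1, h2⟩ | ⟨h1, h2⟩ <;> nlinarith
    have hgt : (1:ℚ) < (n:ℚ) ^ (2:ℤ) := by
      rw [show ((2:ℤ)) = ((2:ℕ):ℤ) by norm_num, zpow_natCast]
      rw [pow_two]
      exact_mod_cast hn2
    have := zpow_right_injective₀ (by linarith : (0:ℚ) < (n:ℚ) ^ (2:ℤ))
      (by linarith : (n:ℚ) ^ (2:ℤ) ≠ 1) E8
    omega
  have hπφa : π (φ (BSa 1 n)) = Multiplicative.ofAdd 1 := by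
    apply toAdd.injective
    rw [← hd, hd1]
    rfl
  -- conclusion 1
  have hcomp : π.comp φ = π := by
    apply PresentedGroup.ext
    intro x
    cases x
    · show π (φ (BSa 1 n)) = π (BSa 1 n)
      rw [hπφa, ha]
    · show π (φ (BSb 1 n)) = π (BSb 1 n)
      rw [hA, hb]
  refine ⟨hcomp, ?_⟩
  -- conclusion 2
  have hsound : ∀ α α' : BS 1 n, twistedConj φ α α' → π α = π α' := by
    rintro α α' ⟨γ, rfl⟩
    have hγ : π (φ γ) = π γ := DFunLike.congr_fun hcomp γ
    rw [map_mul, map_mul, map_inv, hγ, mul_comm (π γ) (π α), mul_assoc, mul_inv_cancel, mul_one]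
  let F : Quot (twistedConj φ) → Multiplicative ℤ := Quot.lift π hsound
  have hsect : ∀ z : Multiplicative ℤ, F (Quot.mk _ ((BSa 1 n) ^ (toAdd z))) = z := by
    intro z
    show π ((BSa 1 n) ^ (toAdd z)) = z
    rw [map_zpow, ha]
    apply toAdd.injective
    simp [toAdd_zpow]
  apply Infinite.of_injective (fun z : Multiplicative ℤ => Quot.mk (twistedConj φ) ((BSa 1 n) ^ (toAdd z)))
  intro z1 z2 hmk
  have := congrArg F hmk
  rw [hsect z1, hsect z2] at this
  exact this

/-- For `|n| > 1`, every injective endomorphism `φ` of `B(1,n)` induces the identity on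
the quotient `ℤ` of the sequence `0 → K → B(1,n) → ℤ → 1` (i.e. `π ∘ φ = π` for the
`a`-exponent-sum map `π`), and consequently `φ` has infinitely many twisted
conjugacy classes. -/
theorem BS_one_n_injective_reidemeister_infinite (n : ℤ) (hn : 1 < |n|)
    (φ : BS 1 n →* BS 1 n) (hφ : Function.Injective φ)
    (π : BS 1 n →* Multiplicative ℤ)
    (ha : π (BSa 1 n) = Multiplicative.ofAdd 1) (hb : π (BSb 1 n) = 1) :
    π.comp φ = π ∧ Infinite (Quot (twistedConj φ)) :=
  BS_one_n_injective_reidemeister_infinite' n hn φ hφ π ha hb
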